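/- Fix α = β = 1/(2 log 2). Then (α+β)·log(α+β) − α·log α − β·log β = 1, and for all positive reals α', β' satisfying (α'+β')·log(α'+β') − α'·log α' − β'·log β' = 1, one has α'·β' ≥ α·β = 1/(4 (log 2)²). -/

import Mathlib

open Real

private lemma keyA {v : ℝ} (hv0 : 0 < v) (hv1 : v < 1) :
    (1 - v) * Real.log (1 + v) ≤ v * (-Real.log v) := by
  have h1 : Real.log (1 + v) ≤ v := by
    have := Real.log_le_sub_one_of_pos (x := 1 + v) (by linarith)
    linarith
  have h2 : Real.log v ≤ v - 1 := Real.log_le_sub_one_of_pos hv0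
  have h3 : 0 ≤ Real.log (1 + v) := Real.log_nonneg (by linarith)
  nlinarith

private noncomputable def Gfun (u : ℝ) : ℝ :=
  2 * Real.cosh u * Real.log (2 * Real.cosh u) - 2 * u * Real.sinh u

private lemma cosh_pos' (u : ℝ) : (0:ℝ) < 2 * Real.cosh u := by positivity

private lemma Gfun_hasDerivAt (u : ℝ) :
    HasDerivAt Gfun (2 * Real.sinh u * Real.log (2 * Real.cosh u) - 2 * u * Real.cosh u) u := by
  have h1 : HasDerivAt (fun x => 2 * Real.cosh x) (2 * Real.sinh u) u :=
    (Real.hasDerivAt_cosh u).const_mul 2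
  have h2 : HasDerivAt (fun x => Real.log (2 * Real.cosh x))
      ((2 * Real.sinh u) / (2 * Real.cosh u)) u :=
    h1.log (ne_of_gt (cosh_pos' u))
  have h3 : HasDerivAt (fun x => 2 * Real.cosh x * Real.log (2 * Real.cosh x))
      (2 * Real.sinh u * Real.log (2 * Real.cosh u)
        + 2 * Real.cosh u * ((2 * Real.sinh u) / (2 * Real.cosh u))) u := h1.mul h2
  have h4 : HasDerivAt (fun x : ℝ => 2 * x * Real.sinh x)
      (2 * Real.sinh u + 2 * u * Real.cosh u) u := by
    have := ((hasDerivAt_id u).const_mul 2).mul (Real.hasDerivAt_sinh u)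
    refine this.congr_deriv ?_
    simp only [id_eq, mul_one]
  have h5 := h3.sub h4
  refine h5.congr_deriv ?_
  have hc : (2 : ℝ) * Real.cosh u ≠ 0 := ne_of_gt (cosh_pos' u)
  field_simp
  ring

private lemma Gderiv_nonpos {u : ℝ} (hu : 0 < u) :
    2 * Real.sinh u * Real.log (2 * Real.cosh u) - 2 * u * Real.cosh u ≤ 0 := by
  set v : ℝ := Real.exp (-(2 * u)) with hv
  have hv0 : 0 < v := Real.exp_pos _
  have hv1 : v < 1 := by
    rw [hv, Real.exp_lt_one_iff]
    linarith
  have hlogv : Real.log v = -(2 * u) := Real.log_exp _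
  have hE : 0 < Real.exp u := Real.exp_pos u
  have hneg : Real.exp (-u) = v * Real.exp u := by
    rw [hv, ← Real.exp_add]; ring_nf
  have hsinh : Real.sinh u = Real.exp u * (1 - v) / 2 := by
    rw [Real.sinh_eq, hneg]; ring
  have hcosh : Real.cosh u = Real.exp u * (1 + v) / 2 := by
    rw [Real.cosh_eq, hneg]; ring
  have hlogc : Real.log (2 * Real.cosh u) = u + Real.log (1 + v) := by
    rw [hcosh]
    have : 2 * (Real.exp u * (1 + v) / 2) = Real.exp u * (1 + v) := by ring
    rw [this, Real.log_mul (ne_of_gt hE) (by positivity), Real.log_exp]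
  have key := keyA hv0 hv1
  rw [hlogv] at key
  rw [hlogc, hsinh, hcosh]
  have key2 : Real.exp u * ((1 - v) * Real.log (1 + v)) ≤ Real.exp u * (v * (2 * u)) := by
    have : v * - -(2 * u) = v * (2 * u) := by ring
    rw [this] at key
    exact mul_le_mul_of_nonneg_left key hE.le
  nlinarith

private lemma Gfun_le {u : ℝ} (hu : 0 ≤ u) : Gfun u ≤ 2 * Real.log 2 := by
  have hanti : AntitoneOn Gfun (Set.Ici (0:ℝ)) := by
    apply antitoneOn_of_deriv_nonpos (convex_Ici 0)
    · exact fun x _ => ((Gfun_hasDerivAt x).continuousAt).continuousWithinAt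
    · intro x _
      exact ((Gfun_hasDerivAt x).differentiableAt).differentiableWithinAt
    · intro x hx
      rw [interior_Ici] at hx
      rw [(Gfun_hasDerivAt x).deriv]
      exact Gderiv_nonpos hx
  have h0 : Gfun 0 = 2 * Real.log 2 := by
    simp [Gfun, Real.cosh_zero, Real.sinh_zero]
  calc Gfun u ≤ Gfun 0 := hanti (Set.self_mem_Ici) (Set.mem_Ici.mpr hu) hu
    _ = 2 * Real.log 2 := h0

private lemma main_ineq {a b : ℝ} (ha : 0 < a) (hb : 0 < b) (hab : b ≤ a)
    (hc : (a + b) * Real.log (a + b) - a * Real.log a - b * Real.log b = 1) :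
    a * b ≥ 1 / (4 * (Real.log 2) ^ 2) := by
  set u : ℝ := Real.log (a / b) / 2 with hu
  have hdiv : (0:ℝ) < a / b := div_pos ha hb
  have hu0 : 0 ≤ u := by
    have h1 : (1:ℝ) ≤ a / b := (one_le_div hb).2 hab
    have h2 := Real.log_nonneg h1
    positivity
  set m : ℝ := Real.sqrt (a * b) with hm
  have hm0 : 0 < m := Real.sqrt_pos.2 (mul_pos ha hb)
  have hexpu : Real.exp u = Real.sqrt (a / b) := by
    rw [Real.sqrt_eq_rpow, Real.rpow_def_of_pos hdiv, hu]
    ring_nf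
  have hexpnu : Real.exp (-u) = Real.sqrt (b / a) := by
    rw [Real.exp_neg, hexpu, ← Real.sqrt_inv]
    congr 1
    field_simp
  have ea : a = m * Real.exp u := by
    rw [hexpu, hm, ← Real.sqrt_mul (by positivity)]
    have : a * b * (a / b) = a ^ 2 := by field_simp
    rw [this, Real.sqrt_sq ha.le]
  have eb : b = m * Real.exp (-u) := by
    rw [hexpnu, hm, ← Real.sqrt_mul (by positivity)]
    have : a * b * (b / a) = b ^ 2 := by field_simp
    rw [this, Real.sqrt_sq hb.le]
  have hsum : a + b = m * (2 * Real.cosh u) := by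
    rw [ea, eb, Real.cosh_eq]; ring
  have hloga : Real.log a = Real.log m + u := by
    rw [ea, Real.log_mul (ne_of_gt hm0) (Real.exp_ne_zero u), Real.log_exp]
  have hlogb : Real.log b = Real.log m + (-u) := by
    rw [eb, Real.log_mul (ne_of_gt hm0) (Real.exp_ne_zero (-u)), Real.log_exp]
  have hlogsum : Real.log (a + b) = Real.log m + Real.log (2 * Real.cosh u) := by
    rw [hsum, Real.log_mul (ne_of_gt hm0) (ne_of_gt (cosh_pos' u))]
  have hkey : (a + b) * Real.log (a + b) - a * Real.log a - b * Real.log b = m * Gfun u := by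
    rw [hlogsum, hsum, hloga, hlogb, ea, eb]
    simp only [Gfun]
    rw [Real.sinh_eq, Real.cosh_eq]
    ring
  rw [hkey] at hc
  have hG : Gfun u ≤ 2 * Real.log 2 := Gfun_le hu0
  have hL : 0 < Real.log 2 := Real.log_pos one_lt_two
  have h1 : 1 ≤ m * (2 * Real.log 2) := by
    calc (1:ℝ) = m * Gfun u := hc.symm
      _ ≤ m * (2 * Real.log 2) := mul_le_mul_of_nonneg_left hG hm0.le
  have hmsq : m ^ 2 = a * b := Real.sq_sqrt (by positivity)
  have h2 : (1:ℝ) ≤ 4 * Real.log 2 ^ 2 * (a * b) := by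
    nlinarith [sq_nonneg (m * (2 * Real.log 2) - 1)]
  rw [ge_iff_le, div_le_iff₀ (by positivity)]
  linarith

theorem stmt_11 (α β : ℝ) (hα : α = 1 / (2 * Real.log 2)) (hβ : β = 1 / (2 * Real.log 2)) :
    (α + β) * Real.log (α + β) - α * Real.log α - β * Real.log β = 1 ∧
      α * β = 1 / (4 * (Real.log 2) ^ 2) ∧
      ∀ α' β' : ℝ, 0 < α' → 0 < β' →
        (α' + β') * Real.log (α' + β') - α' * Real.log α' - β' * Real.log β' = 1 →
          α' * β' ≥ α * β := by
  have hL : 0 < Real.log 2 := Real.log_pos one_lt_two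
  have hL' : Real.log 2 ≠ 0 := ne_of_gt hL
  have hsum : α + β = 1 / Real.log 2 := by
    rw [hα, hβ]; field_simp; norm_num
  have hab : α * β = 1 / (4 * (Real.log 2) ^ 2) := by
    have h4 : (2 * Real.log 2) * (2 * Real.log 2) = 4 * (Real.log 2) ^ 2 := by ring
    rw [hα, hβ, div_mul_div_comm, one_mul, h4]
  refine ⟨?_, hab, ?_⟩
  · have l1 : Real.log (1 / Real.log 2) = -Real.log (Real.log 2) := by
      rw [one_div, Real.log_inv]
    have l2 : Real.log (1 / (2 * Real.log 2))
        = -(Real.log 2 + Real.log (Real.log 2)) := by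
      rw [one_div, Real.log_inv, Real.log_mul two_ne_zero hL']
    rw [hsum, hα, hβ, l1, l2]
    field_simp
    ring
  · intro α' β' ha hb hc
    rw [hab]
    rcases le_total β' α' with h | h
    · exact main_ineq ha hb h hc
    · have hc' : (β' + α') * Real.log (β' + α') - β' * Real.log β' - α' * Real.log α' = 1 := by
        rw [add_comm]; linarith
      have := main_ineq hb ha h hc'
      linarith [this]
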